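/- Let v, ṽ : ℝ^d → ℝ^m be outputs of single-hidden-layer ReLU networks, so v_j = p_j − q_j and ṽ_j = p̃_j − q̃_j with positive/negative tropical polynomials having extended Newton polytopes P_j, Q_j, P̃_j, Q̃_j. Then (1/ρ)·max_{x ∈ B} ‖v(x) − ṽ(x)‖₁ ≤ ∑_{j=1}^m ( H(P_j, P̃_j) + H(Q_j, Q̃_j) ), where B = {x : ‖x‖ ≤ r} and ρ = √(r² + 1). -/

import Mathlib

open scoped Pointwise Classical
open scoped RealInnerProductSpace

section Helpers

variable {E : Type*} [NormedAddCommGroup E] [InnerProductSpace ℝ E]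

lemma isCompact_seg (x y : E) : IsCompact (segment ℝ x y) := by
  rw [segment_eq_image]
  exact isCompact_Icc.image (by continuity)

lemma sumSeg_isCompact {ι : Type*} (s : Finset ι) (g : ι → E) :
    IsCompact (∑ i ∈ s, segment ℝ 0 (g i)) := by
  classical
  induction s using Finset.induction with
  | empty =>
      simp only [Finset.sum_empty]
      exact isCompact_singleton
  | @insert _ _ h ih =>
      rw [Finset.sum_insert h]
      exact (isCompact_seg _ _).add ih

lemma zero_mem_sumSeg {ι : Type*} (s : Finset ι) (g : ι → E) :
    (0 : E) ∈ ∑ i ∈ s, segment ℝ 0 (g i) := by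
  classical
  induction s using Finset.induction with
  | empty => simp only [Finset.sum_empty]; rfl
  | @insert _ _ h ih =>
      rw [Finset.sum_insert h]
      simpa using Set.add_mem_add (left_mem_segment ℝ 0 _) ih

lemma isLUB_inner_segment (u g : E) :
    IsLUB ((fun z => ⟪u, z⟫) '' segment ℝ 0 g) (max ⟪u, g⟫ 0) := by
  have himg : (fun z => ⟪u, z⟫) '' segment ℝ 0 g = segment ℝ (0 : ℝ) ⟪u, g⟫ := by
    have := image_segment ℝ ((innerSL ℝ u).toLinearMap.toAffineMap) (0 : E) g
    simpa using this
  rw [himg, segment_eq_uIcc, Set.uIcc]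
  have h0 : (0 : ℝ) ⊓ ⟪u, g⟫ ≤ (0 : ℝ) ⊔ ⟪u, g⟫ := min_le_max
  simpa [max_comm] using isLUB_Icc h0

lemma isLUB_inner_add (u : E) {A B : Set E} {α β : ℝ}
    (hA : IsLUB ((fun z => ⟪u, z⟫) '' A) α) (hB : IsLUB ((fun z => ⟪u, z⟫) '' B) β) :
    IsLUB ((fun z => ⟪u, z⟫) '' (A + B)) (α + β) := by
  constructor
  · rintro _ ⟨z, hz, rfl⟩
    rcases Set.mem_add.1 hz with ⟨za, hza, zb, hzb, rfl⟩
    calc ⟪u, za + zb⟫ = ⟪u, za⟫ + ⟪u, zb⟫ := inner_add_right u za zb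
      _ ≤ α + β := add_le_add (hA.1 ⟨za, hza, rfl⟩) (hB.1 ⟨zb, hzb, rfl⟩)
  · intro c hc
    have h1 : α ≤ c - β := by
      apply hA.2
      rintro _ ⟨za, hza, rfl⟩
      have h2 : β ≤ c - ⟪u, za⟫ := by
        apply hB.2
        rintro _ ⟨zb, hzb, rfl⟩
        have : ⟪u, za + zb⟫ ≤ c := hc ⟨za + zb, Set.add_mem_add hza hzb, rfl⟩
        rw [inner_add_right] at this
        linarith
      linarith
    linarith

lemma isLUB_inner_sumSeg {ι : Type*} (u : E) (s : Finset ι) (g : ι → E) :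
    IsLUB ((fun z => ⟪u, z⟫) '' ∑ i ∈ s, segment ℝ 0 (g i))
      (∑ i ∈ s, max ⟪u, g i⟫ 0) := by
  classical
  induction s using Finset.induction with
  | empty =>
      simp only [Finset.sum_empty]
      have : (fun z => ⟪u, z⟫) '' (0 : Set E) = {(0 : ℝ)} := by
        ext t; simp [Set.mem_image]
      rw [this]
      exact isLUB_singleton
  | @insert _ _ h ih =>
      rw [Finset.sum_insert h, Finset.sum_insert h]
      exact isLUB_inner_add u (isLUB_inner_segment u _) ih

lemma lub_le_lub_add_hausdorff {A B : Set E} (hAne : A.Nonempty) (hBne : B.Nonempty)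
    (hAb : Bornology.IsBounded A) (hBb : Bornology.IsBounded B) (u : E) {α β : ℝ}
    (hα : IsLUB ((fun z => ⟪u, z⟫) '' A) α) (hβ : IsLUB ((fun z => ⟪u, z⟫) '' B) β) :
    α ≤ β + Metric.hausdorffDist A B * ‖u‖ := by
  have hfin : EMetric.hausdorffEdist A B ≠ ⊤ :=
    Metric.hausdorffEdist_ne_top_of_nonempty_of_bounded hAne hBne hAb hBb
  apply hα.2
  rintro _ ⟨z, hz, rfl⟩
  by_cases hu : u = 0
  · obtain ⟨w, hw⟩ := hBne
    have hβ0 : (0 : ℝ) ≤ β := by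
      have := hβ.1 ⟨w, hw, rfl⟩
      simpa [hu] using this
    have hH : 0 ≤ Metric.hausdorffDist A B := Metric.hausdorffDist_nonneg
    simp only [hu, inner_zero_left]
    nlinarith [norm_nonneg (0 : E)]
  · have hun : (0 : ℝ) < ‖u‖ := norm_pos_iff.2 hu
    apply le_of_forall_pos_le_add
    intro ε hε
    have hlt : Metric.hausdorffDist A B < Metric.hausdorffDist A B + ε / ‖u‖ := by
      have : 0 < ε / ‖u‖ := div_pos hε hun
      linarith
    obtain ⟨w, hw, hdw⟩ := Metric.exists_dist_lt_of_hausdorffDist_lt hz hlt hfin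
    have h1 : ⟪u, z⟫ ≤ ⟪u, w⟫ + ‖u‖ * dist z w := by
      have : ⟪u, z - w⟫ ≤ ‖u‖ * ‖z - w‖ := real_inner_le_norm u (z - w)
      rw [inner_sub_right] at this
      rw [dist_eq_norm]
      linarith
    have h2 : ⟪u, w⟫ ≤ β := hβ.1 ⟨w, hw, rfl⟩
    have h3 : ‖u‖ * dist z w ≤ ‖u‖ * (Metric.hausdorffDist A B + ε / ‖u‖) :=
      mul_le_mul_of_nonneg_left hdw.le hun.le
    have h4 : ‖u‖ * (Metric.hausdorffDist A B + ε / ‖u‖)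
        = Metric.hausdorffDist A B * ‖u‖ + ε := by
      field_simp
    linarith

lemma abs_lub_sub_le {A B : Set E} (hAne : A.Nonempty) (hBne : B.Nonempty)
    (hAb : Bornology.IsBounded A) (hBb : Bornology.IsBounded B) (u : E) {α β : ℝ}
    (hα : IsLUB ((fun z => ⟪u, z⟫) '' A) α) (hβ : IsLUB ((fun z => ⟪u, z⟫) '' B) β) :
    |α - β| ≤ Metric.hausdorffDist A B * ‖u‖ := by
  rw [abs_sub_le_iff]
  constructor
  · have := lub_le_lub_add_hausdorff hAne hBne hAb hBb u hα hβ
    linarith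
  · have := lub_le_lub_add_hausdorff hBne hAne hBb hAb u hβ hα
    rw [Metric.hausdorffDist_comm] at this
    linarith

end Helpers

section Main

variable {E : Type*} [NormedAddCommGroup E] [InnerProductSpace ℝ E]

lemma sum_decomp {ι : Type*} [Fintype ι] (c : ι → ℝ) (M : ι → ℝ) :
    ∑ i, c i * M i = (∑ i ∈ Finset.univ.filter (fun i => 0 < c i), c i * M i)
      - (∑ i ∈ Finset.univ.filter (fun i => c i < 0), -(c i) * M i) := by
  classical
  rw [← Finset.sum_filter_add_sum_filter_not Finset.univ (fun i => 0 < c i)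
    (fun i => c i * M i)]
  have h : ∑ i ∈ Finset.univ.filter (fun i => ¬ 0 < c i), c i * M i
      = ∑ i ∈ Finset.univ.filter (fun i => c i < 0), c i * M i := by
    apply (Finset.sum_subset ?_ ?_).symm
    · intro i hi
      simp only [Finset.mem_filter, Finset.mem_univ, true_and] at hi ⊢
      linarith
    · intro i hi hni
      simp only [Finset.mem_filter, Finset.mem_univ, true_and, not_lt] at hi hni
      have : c i = 0 := le_antisymm hi hni
      simp [this]
  rw [h]
  simp only [neg_mul, Finset.sum_neg_distrib, sub_neg_eq_add]

lemma isLUB_P (u : E) {ι : Type*} [Fintype ι] (c : ι → ℝ) (g : ι → E) :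
    IsLUB ((fun z => ⟪u, z⟫) ''
        ∑ i ∈ Finset.univ.filter (fun i => 0 < c i), segment ℝ 0 (c i • g i))
      (∑ i ∈ Finset.univ.filter (fun i => 0 < c i), c i * max ⟪u, g i⟫ 0) := by
  classical
  have h := isLUB_inner_sumSeg u (Finset.univ.filter (fun i => 0 < c i))
    (fun i => c i • g i)
  have he : ∑ i ∈ Finset.univ.filter (fun i => 0 < c i), max ⟪u, c i • g i⟫ 0
      = ∑ i ∈ Finset.univ.filter (fun i => 0 < c i), c i * max ⟪u, g i⟫ 0 := by
    refine Finset.sum_congr rfl fun i hi => ?_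
    have hc : (0 : ℝ) ≤ c i := (Finset.mem_filter.1 hi).2.le
    rw [real_inner_smul_right, mul_max_of_nonneg _ _ hc, mul_zero]
  rwa [he] at h

lemma isLUB_Q (u : E) {ι : Type*} [Fintype ι] (c : ι → ℝ) (g : ι → E) :
    IsLUB ((fun z => ⟪u, z⟫) ''
        ∑ i ∈ Finset.univ.filter (fun i => c i < 0), segment ℝ 0 (|c i| • g i))
      (∑ i ∈ Finset.univ.filter (fun i => c i < 0), -(c i) * max ⟪u, g i⟫ 0) := by
  classical
  have h := isLUB_inner_sumSeg u (Finset.univ.filter (fun i => c i < 0))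
    (fun i => |c i| • g i)
  have he : ∑ i ∈ Finset.univ.filter (fun i => c i < 0), max ⟪u, |c i| • g i⟫ 0
      = ∑ i ∈ Finset.univ.filter (fun i => c i < 0), -(c i) * max ⟪u, g i⟫ 0 := by
    refine Finset.sum_congr rfl fun i hi => ?_
    have hc : c i < 0 := (Finset.mem_filter.1 hi).2
    rw [real_inner_smul_right, abs_of_neg hc,
      mul_max_of_nonneg _ _ (neg_nonneg.2 hc.le), mul_zero]
  rwa [he] at h

lemma networkBound {ι κ : Type*} [Fintype ι] [Fintype κ] (u : E)
    (c : ι → ℝ) (g : ι → E) (c' : κ → ℝ) (g' : κ → E) :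
    |(∑ i, c i * max ⟪u, g i⟫ 0) - (∑ i, c' i * max ⟪u, g' i⟫ 0)| ≤
      (Metric.hausdorffDist
          (∑ i ∈ Finset.univ.filter (fun i => 0 < c i), segment ℝ 0 (c i • g i))
          (∑ i ∈ Finset.univ.filter (fun i => 0 < c' i), segment ℝ 0 (c' i • g' i)) +
        Metric.hausdorffDist
          (∑ i ∈ Finset.univ.filter (fun i => c i < 0), segment ℝ 0 (|c i| • g i))
          (∑ i ∈ Finset.univ.filter (fun i => c' i < 0), segment ℝ 0 (|c' i| • g' i)))
        * ‖u‖ := by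
  classical
  have hp := abs_lub_sub_le ⟨0, zero_mem_sumSeg _ _⟩ ⟨0, zero_mem_sumSeg _ _⟩
    (sumSeg_isCompact _ _).isBounded (sumSeg_isCompact _ _).isBounded u
    (isLUB_P u c g) (isLUB_P u c' g')
  have hq := abs_lub_sub_le ⟨0, zero_mem_sumSeg _ _⟩ ⟨0, zero_mem_sumSeg _ _⟩
    (sumSeg_isCompact _ _).isBounded (sumSeg_isCompact _ _).isBounded u
    (isLUB_Q u c g) (isLUB_Q u c' g')
  rw [sum_decomp c (fun i => max ⟪u, g i⟫ 0), sum_decomp c' (fun i => max ⟪u, g' i⟫ 0)]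
  set p := ∑ i ∈ Finset.univ.filter (fun i => 0 < c i), c i * max ⟪u, g i⟫ 0
  set q := ∑ i ∈ Finset.univ.filter (fun i => c i < 0), -(c i) * max ⟪u, g i⟫ 0
  set p' := ∑ i ∈ Finset.univ.filter (fun i => 0 < c' i), c' i * max ⟪u, g' i⟫ 0
  set q' := ∑ i ∈ Finset.univ.filter (fun i => c' i < 0), -(c' i) * max ⟪u, g' i⟫ 0
  calc |(p - q) - (p' - q')| = |(p - p') - (q - q')| := by ring_nf
    _ ≤ |p - p'| + |q - q'| := abs_sub _ _
    _ ≤ _ := by rw [add_mul]; exact add_le_add hp hq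

end Main

/-- Bound for multi-output single-hidden-layer ReLU networks: with `v_j = p_j - q_j` and
positive/negative zonotopes `P_j, Q_j` (Minkowski sums of the positive/negative generators
`|c_{ji}|·(aᵢ, bᵢ)` in `ℝ^{d+1}` with the Euclidean norm), for all `x` in the ball of
radius `r`, `‖v(x) - ṽ(x)‖₁ ≤ ρ · ∑_j (H(P_j, P̃_j) + H(Q_j, Q̃_j))`, `ρ = √(r² + 1)`. -/
theorem relu_network_L1_bound_hausdorff {d n n' m : ℕ} (r : ℝ) (hr : 0 < r)
    (a : Fin n → EuclideanSpace ℝ (Fin d)) (b : Fin n → ℝ) (C : Fin m → Fin n → ℝ)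
    (a' : Fin n' → EuclideanSpace ℝ (Fin d)) (b' : Fin n' → ℝ) (C' : Fin m → Fin n' → ℝ) :
    let W := WithLp 2 (EuclideanSpace ℝ (Fin d) × ℝ)
    let gen : Fin n → W := fun i => (WithLp.equiv 2 _).symm (a i, b i)
    let gen' : Fin n' → W := fun i => (WithLp.equiv 2 _).symm (a' i, b' i)
    let v : Fin m → EuclideanSpace ℝ (Fin d) → ℝ :=
      fun j x => ∑ i, C j i * max ((inner ℝ (a i) x : ℝ) + b i) 0
    let v' : Fin m → EuclideanSpace ℝ (Fin d) → ℝ :=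
      fun j x => ∑ i, C' j i * max ((inner ℝ (a' i) x : ℝ) + b' i) 0
    let P : Fin m → Set W := fun j =>
      ∑ i ∈ Finset.univ.filter (fun i => 0 < C j i), segment ℝ 0 (C j i • gen i)
    let Q : Fin m → Set W := fun j =>
      ∑ i ∈ Finset.univ.filter (fun i => C j i < 0), segment ℝ 0 (|C j i| • gen i)
    let P' : Fin m → Set W := fun j =>
      ∑ i ∈ Finset.univ.filter (fun i => 0 < C' j i), segment ℝ 0 (C' j i • gen' i)
    let Q' : Fin m → Set W := fun j =>
      ∑ i ∈ Finset.univ.filter (fun i => C' j i < 0), segment ℝ 0 (|C' j i| • gen' i)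
    ∀ x : EuclideanSpace ℝ (Fin d), ‖x‖ ≤ r →
      ∑ j, |v j x - v' j x| ≤
        Real.sqrt (r ^ 2 + 1) *
          ∑ j, (Metric.hausdorffDist (P j) (P' j) + Metric.hausdorffDist (Q j) (Q' j)) := by
  intro W gen gen' v v' P Q P' Q' x hx
  classical
  set u : W := (WithLp.equiv 2 _).symm (x, (1 : ℝ)) with hu_def
  have hnorm : ‖u‖ = Real.sqrt (‖x‖ ^ 2 + 1) := by
    rw [hu_def, WithLp.prod_norm_eq_of_L2]
    simp
  have hρ : ‖u‖ ≤ Real.sqrt (r ^ 2 + 1) := by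
    rw [hnorm]
    apply Real.sqrt_le_sqrt
    nlinarith [norm_nonneg x]
  have hgen : ∀ i, (inner ℝ u (gen i) : ℝ) = (inner ℝ (a i) x : ℝ) + b i := by
    intro i
    rw [WithLp.prod_inner_apply]
    simp only [hu_def, gen, WithLp.equiv_symm_apply, WithLp.toLp_fst, WithLp.toLp_snd]
    rw [real_inner_comm]
    norm_num [RCLike.inner_apply]
  have hgen' : ∀ i, (inner ℝ u (gen' i) : ℝ) = (inner ℝ (a' i) x : ℝ) + b' i := by
    intro i
    rw [WithLp.prod_inner_apply]
    simp only [hu_def, gen', WithLp.equiv_symm_apply, WithLp.toLp_fst, WithLp.toLp_snd]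
    rw [real_inner_comm]
    norm_num [RCLike.inner_apply]
  have key : ∀ j, |v j x - v' j x| ≤
      (Metric.hausdorffDist (P j) (P' j) + Metric.hausdorffDist (Q j) (Q' j)) * ‖u‖ := by
    intro j
    have hv : v j x = ∑ i, C j i * max (⟪u, gen i⟫) 0 :=
      Finset.sum_congr rfl fun i _ => by rw [hgen i]
    have hv' : v' j x = ∑ i, C' j i * max (⟪u, gen' i⟫) 0 :=
      Finset.sum_congr rfl fun i _ => by rw [hgen' i]
    rw [hv, hv']
    exact networkBound u (C j) gen (C' j) gen'
  have hd : ∀ j, 0 ≤ Metric.hausdorffDist (P j) (P' j) + Metric.hausdorffDist (Q j) (Q' j) :=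
    fun j => add_nonneg Metric.hausdorffDist_nonneg Metric.hausdorffDist_nonneg
  calc ∑ j, |v j x - v' j x|
      ≤ ∑ j, (Metric.hausdorffDist (P j) (P' j) + Metric.hausdorffDist (Q j) (Q' j)) * ‖u‖ :=
        Finset.sum_le_sum fun j _ => key j
    _ ≤ ∑ j, (Metric.hausdorffDist (P j) (P' j) + Metric.hausdorffDist (Q j) (Q' j)) *
          Real.sqrt (r ^ 2 + 1) :=
        Finset.sum_le_sum fun j _ => mul_le_mul_of_nonneg_left hρ (hd j)
    _ = Real.sqrt (r ^ 2 + 1) *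
          ∑ j, (Metric.hausdorffDist (P j) (P' j) + Metric.hausdorffDist (Q j) (Q' j)) := by
        rw [Finset.mul_sum]
        exact Finset.sum_congr rfl fun j _ => mul_comm _ _
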